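/- Let G be a group. There is a 2-coloring of G such that for every infinite periodic subgroup H ≤ G that is almost-monochromatic, H contains a subgroup isomorphic to ⊕_n ℤ/2. -/

import Mathlib

/-- In an infinite group with only finitely many non-involutions, any two
involutions commute. -/
private lemma aux_comm {K : Type*} [Group K] [Infinite K]
    (hT : {x : K | x * x ≠ 1}.Finite) {x y : K}
    (hx : x * x = 1) (hy : y * y = 1) : x * y = y * x := by
  by_contra hcomm
  set good : Set K :=
    {z | z * z = 1 ∧ (x * z) * (x * z) = 1 ∧ (y * z) * (y * z) = 1} with hgood
  have hcfin : goodᶜ.Finite := by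
    refine Set.Finite.subset
      ((hT.union (hT.preimage (mul_right_injective x).injOn)).union
        (hT.preimage (mul_right_injective y).injOn)) ?_
    intro z hz
    simp only [hgood, Set.mem_compl_iff, Set.mem_setOf_eq, not_and_or] at hz
    rcases hz with h | h | h
    · exact Or.inl (Or.inl h)
    · exact Or.inl (Or.inr h)
    · exact Or.inr h
  have hginf : good.Infinite := by
    have := hcfin.infinite_compl
    rwa [compl_compl] at this
  have hxy : (x * y) * (x * y) ≠ 1 := by
    intro h
    apply hcomm
    have h1 : (x * y)⁻¹ = x * y := inv_eq_of_mul_eq_one_right h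
    calc x * y = (x * y)⁻¹ := h1.symm
      _ = y⁻¹ * x⁻¹ := mul_inv_rev x y
      _ = y * x := by rw [inv_eq_of_mul_eq_one_right hy, inv_eq_of_mul_eq_one_right hx]
  have hsub : good ⊆ ((x * y) * ·) ⁻¹' {z | z * z ≠ 1} := by
    rintro z ⟨hz, hxz, hyz⟩
    have hzx : z * x = x * z := by
      calc z * x = z⁻¹ * x⁻¹ := by
            rw [inv_eq_of_mul_eq_one_right hz, inv_eq_of_mul_eq_one_right hx]
        _ = (x * z)⁻¹ := (mul_inv_rev x z).symm
        _ = x * z := inv_eq_of_mul_eq_one_right hxz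
    have hzy : z * y = y * z := by
      calc z * y = z⁻¹ * y⁻¹ := by
            rw [inv_eq_of_mul_eq_one_right hz, inv_eq_of_mul_eq_one_right hy]
        _ = (y * z)⁻¹ := (mul_inv_rev y z).symm
        _ = y * z := inv_eq_of_mul_eq_one_right hyz
    have key : (x * y * z) * (x * y * z) = (x * y) * (x * y) := by
      calc (x * y * z) * (x * y * z) = x * y * (z * x) * (y * z) := by group
        _ = x * y * (x * z) * (y * z) := by rw [hzx]
        _ = x * (y * x) * (z * y) * z := by group
        _ = x * (y * x) * (y * z) * z := by rw [hzy]
        _ = x * y * (x * y) * (z * z) := by group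
        _ = x * y * (x * y) * 1 := by rw [hz]
        _ = (x * y) * (x * y) := by group
    show (x * y * z) * (x * y * z) ≠ 1
    rw [key]; exact hxy
  exact hginf (Set.Finite.subset (hT.preimage (mul_right_injective (x * y)).injOn) hsub)

/-- An infinite group with only finitely many non-involutions is elementary
abelian. -/
private lemma aux_sq_all {K : Type*} [Group K] [Infinite K]
    (hT : {x : K | x * x ≠ 1}.Finite) : ∀ x : K, x * x = 1 := by
  by_contra hg
  push_neg at hg
  obtain ⟨g, hgne⟩ := hg
  set E : Set K := {x | x * x = 1} with hE
  have hEinf : E.Infinite := by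
    have := hT.infinite_compl
    have hcc : {x : K | x * x ≠ 1}ᶜ = E := by
      ext z; simp [hE]
    rwa [hcc] at this
  have hEmul : ∀ a ∈ E, ∀ b ∈ E, a * b ∈ E := by
    intro a ha b hb
    have hab := aux_comm hT ha hb
    show (a * b) * (a * b) = 1
    calc (a * b) * (a * b) = a * (b * a) * b := by group
      _ = a * (a * b) * b := by rw [hab]
      _ = (a * a) * (b * b) := by group
      _ = 1 := by rw [ha, hb, one_mul]
  have hsub : E ⊆ (g * ·) ⁻¹' {x | x * x ≠ 1} := by
    intro e he
    show (g * e) * (g * e) ≠ 1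
    intro hbad
    apply hgne
    have hge : g * e ∈ E := hbad
    have he' : e⁻¹ ∈ E := by
      show e⁻¹ * e⁻¹ = 1
      rw [inv_eq_of_mul_eq_one_right he]; exact he
    have : (g * e) * e⁻¹ ∈ E := hEmul _ hge _ he'
    exact (by simpa using this : g ∈ E)
  exact hEinf (Set.Finite.subset (hT.preimage (mul_right_injective g).injOn) hsub)

/-- Any infinite elementary abelian 2-group contains a copy of `⊕ₙ ℤ/2`. -/
private lemma aux_embed {K : Type*} [Group K] [Infinite K]
    (hsq : ∀ x : K, x * x = 1) :
    ∃ f : Multiplicative (DirectSum ℕ (fun _ => ZMod 2)) →* K,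
      Function.Injective f := by
  have comm : ∀ a b : K, a * b = b * a := by
    intro a b
    calc a * b = (a * b)⁻¹ := (inv_eq_of_mul_eq_one_right (hsq (a * b))).symm
      _ = b⁻¹ * a⁻¹ := mul_inv_rev a b
      _ = b * a := by rw [inv_eq_of_mul_eq_one_right (hsq b),
        inv_eq_of_mul_eq_one_right (hsq a)]
  letI : CommGroup K := { ‹Group K› with mul_comm := comm }
  letI : Module (ZMod 2) (Additive K) := AddCommGroup.zmodModule (by
    intro x
    show (2 : ℕ) • x = 0
    rw [two_nsmul]
    exact hsq (Additive.toMul x))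
  let b := Module.Basis.ofVectorSpace (ZMod 2) (Additive K)
  haveI : Infinite (Module.Basis.ofVectorSpaceIndex (ZMod 2) (Additive K)) := by
    by_contra hfin
    rw [not_infinite_iff_finite] at hfin
    have h1 : Finite (Additive K) :=
      Finite.of_equiv _ (b.repr.toEquiv.trans (Finsupp.equivFunOnFinite)).symm
    have h2 : Finite K := Finite.of_equiv (Additive K) Additive.toMul
    exact (not_finite_iff_infinite.mpr ‹Infinite K›) h2
  let e := Infinite.natEmbedding (Module.Basis.ofVectorSpaceIndex (ZMod 2) (Additive K))
  let L1 := (finsuppLEquivDirectSum (ZMod 2) (ZMod 2) ℕ).symm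
  let L2 := Finsupp.lmapDomain (ZMod 2) (ZMod 2) e
  let g : DirectSum ℕ (fun _ => ZMod 2) →ₗ[ZMod 2] Additive K :=
    b.repr.symm.toLinearMap ∘ₗ L2 ∘ₗ L1.toLinearMap
  have hg : Function.Injective g :=
    b.repr.symm.injective.comp
      ((Finsupp.mapDomain_injective e.injective).comp L1.injective)
  refine ⟨{ toFun := fun d => Additive.toMul (g (Multiplicative.toAdd d)),
            map_one' := ?_, map_mul' := ?_ }, ?_⟩
  · simp
  · intro a c; simp [map_add]
  · intro a c h
    exact Multiplicative.toAdd.injective (hg (Additive.toMul.injective h))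

/-- For each group `G` there is a 2-coloring of `G` such that every infinite,
periodic, almost-monochromatic subgroup `H ≤ G` contains a subgroup isomorphic to
`⊕ₙ ℤ/2`. -/
theorem group_true_coloring (G : Type*) [Group G] :
    ∃ c : G → Fin 2, ∀ H : Subgroup G, Infinite H →
      (∀ h ∈ H, IsOfFinOrder h) →
      (∃ col : Fin 2, {x ∈ (H : Set G) | c x ≠ col}.Finite) →
      ∃ f : Multiplicative (DirectSum ℕ (fun _ => ZMod 2)) →* G,
        Function.Injective f ∧ ∀ x, f x ∈ H := by
  classical
  refine ⟨fun x => if WellOrderingRel x x⁻¹ then 0 else 1, ?_⟩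
  rintro H hinf _ ⟨col, hfin⟩
  have hkey : ∀ x : G, x * x ≠ 1 →
      (if WellOrderingRel x x⁻¹ then (0 : Fin 2) else 1) ≠
      (if WellOrderingRel x⁻¹ x⁻¹⁻¹ then (0 : Fin 2) else 1) := by
    intro x hx
    have hne : x ≠ x⁻¹ := by
      intro h
      apply hx
      nth_rewrite 2 [h]
      exact mul_inv_cancel x
    rw [inv_inv]
    rcases trichotomous_of WellOrderingRel x x⁻¹ with h | h | h
    · simp [h, asymm h]
    · exact absurd h hne
    · simp [h, asymm h]
  set T : Set G := {x ∈ (H : Set G) | (if WellOrderingRel x x⁻¹ then (0 : Fin 2) else 1) ≠ col}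
    with hTdef
  have hbig : {x ∈ (H : Set G) | x * x ≠ 1}.Finite := by
    refine Set.Finite.subset (hfin.union (hfin.preimage inv_injective.injOn)) ?_
    rintro x ⟨hxH, hxx⟩
    by_cases hc : (if WellOrderingRel x x⁻¹ then (0 : Fin 2) else 1) ≠ col
    · exact Or.inl ⟨hxH, hc⟩
    · push_neg at hc
      refine Or.inr ?_
      show x⁻¹ ∈ T
      refine ⟨H.inv_mem hxH, ?_⟩
      rw [← hc]
      exact (hkey x hxx).symm
  haveI : Infinite ↥H := hinf
  have hsub : {k : ↥H | k * k ≠ 1}.Finite := by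
    refine Set.Finite.subset (hbig.preimage Subtype.val_injective.injOn) ?_
    intro k hk
    refine ⟨k.2, ?_⟩
    intro hbad
    apply hk
    exact Subtype.ext hbad
  have hsq := aux_sq_all hsub
  obtain ⟨f0, hf0⟩ := aux_embed hsq
  refine ⟨H.subtype.comp f0, ?_, ?_⟩
  · exact H.subtype_injective.comp hf0
  · intro x
    exact (f0 x).2
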